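/- arXiv:2504.00323 — 2 statements merged into one kernel-verified Lean document; each statement's English description precedes it below -/
import Mathlib

section
/- For s ≥ 3, w_0 > 1, and w_1 = (1 + T_{s−1}(w_0))/T_{s−1}′(w_0), the stability polynomial R_s defined by R_s′(x) = b_{s−1}(1 + T_{s−1}(w_0 + w_1 x)) with R_s(0) = 1 (b_{s−1} = 1/(1 + T_{s−1}(w_0))) is monotonically non-decreasing on the interval [−ρ_s, 0], where ρ_s = (1 + w_0)/w_1. -/
open Real

/-- Chebyshev polynomial of the first kind, as a real function. -/
noncomputable def chebT : ℕ → ℝ → ℝ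
  | 0, _ => 1
  | 1, x => x
  | (n+2), x => 2 * x * chebT (n+1) x - chebT n x

lemma chebT_cos : ∀ (n : ℕ) (θ : ℝ), chebT n (Real.cos θ) = Real.cos (n * θ)
  | 0, θ => by simp [chebT]
  | 1, θ => by simp [chebT]
  | (n+2), θ => by
    have h1 := chebT_cos (n+1) θ
    have h0 := chebT_cos n θ
    have key : Real.cos ((↑(n+2) : ℝ) * θ) + Real.cos ((n : ℝ) * θ)
        = 2 * Real.cos θ * Real.cos ((↑(n+1) : ℝ) * θ) := by
      have ha : ((n+2 : ℕ) : ℝ) * θ = ((n+1 : ℕ) : ℝ) * θ + θ := by push_cast; ring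
      have hb : ((n : ℕ) : ℝ) * θ = ((n+1 : ℕ) : ℝ) * θ - θ := by push_cast; ring
      rw [ha, hb, Real.cos_add, Real.cos_sub]; ring
    show 2 * Real.cos θ * chebT (n+1) (Real.cos θ) - chebT n (Real.cos θ) = _
    rw [h1, h0]
    linarith [key]

lemma chebT_abs_le (n : ℕ) {x : ℝ} (h1 : -1 ≤ x) (h2 : x ≤ 1) : |chebT n x| ≤ 1 := by
  have : chebT n x = Real.cos (n * Real.arccos x) := by
    rw [← Real.cos_arccos h1 h2, chebT_cos, Real.cos_arccos h1 h2]
  rw [this]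
  exact Real.abs_cos_le_one _

lemma chebT_ge_one : ∀ (n : ℕ) {x : ℝ}, 1 ≤ x → 1 ≤ chebT n x ∧ chebT n x ≤ chebT (n+1) x
  | 0, x, hx => by constructor <;> simp [chebT, hx]
  | (n+1), x, hx => by
    obtain ⟨h1, h2⟩ := chebT_ge_one n hx
    have h3 : 1 ≤ chebT (n+1) x := le_trans h1 h2
    refine ⟨h3, ?_⟩
    show chebT (n+1) x ≤ 2 * x * chebT (n+1) x - chebT n x
    nlinarith

lemma one_add_chebT_nonneg (n : ℕ) {x : ℝ} (hx : -1 ≤ x) : 0 ≤ 1 + chebT n x := by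
  rcases le_total x 1 with h | h
  · have := chebT_abs_le n hx h
    have := abs_le.mp this
    linarith [this.1]
  · linarith [(chebT_ge_one n h).1]

noncomputable def chebD : ℕ → ℝ → ℝ
  | 0, _ => 0
  | 1, _ => 1
  | (n+2), x => 2 * chebT (n+1) x + 2 * x * chebD (n+1) x - chebD n x

lemma chebT_hasDerivAt : ∀ (n : ℕ) (x : ℝ), HasDerivAt (chebT n) (chebD n x) x
  | 0, x => by
    have : HasDerivAt (fun _ : ℝ => (1:ℝ)) 0 x := hasDerivAt_const x 1
    exact this
  | 1, x => by
    have : HasDerivAt (fun y : ℝ => y) 1 x := hasDerivAt_id x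
    exact this
  | (n+2), x => by
    have h1 := chebT_hasDerivAt (n+1) x
    have h0 := chebT_hasDerivAt n x
    have hx : HasDerivAt (fun y : ℝ => 2 * y) 2 x := by
      simpa using (hasDerivAt_id x).const_mul (2:ℝ)
    have h := (hx.mul h1).sub h0
    have : HasDerivAt (fun y => 2 * y * chebT (n+1) y - chebT n y)
        (2 * chebT (n+1) x + 2 * x * chebD (n+1) x - chebD n x) x := by
      exact h
    exact this

lemma chebD_chain : ∀ (n : ℕ) {x : ℝ}, 1 < x →
    0 ≤ chebD n x ∧ chebD n x + 1 ≤ chebD (n+1) x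
  | 0, x, hx => by simp [chebD]
  | (n+1), x, hx => by
    obtain ⟨h0, h1⟩ := chebD_chain n hx
    have h2 : 1 ≤ chebD (n+1) x := by linarith
    refine ⟨by linarith, ?_⟩
    have hT : 1 ≤ chebT (n+1) x := (chebT_ge_one (n+1) hx.le).1
    show chebD (n+1) x + 1 ≤ 2 * chebT (n+1) x + 2 * x * chebD (n+1) x - chebD n x
    nlinarith

lemma chebD_pos (n : ℕ) (hn : 1 ≤ n) {x : ℝ} (hx : 1 < x) : 1 ≤ chebD n x := by
  obtain ⟨m, rfl⟩ := Nat.exists_eq_add_of_le hn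
  obtain ⟨h0, h1⟩ := chebD_chain m hx
  simpa [add_comm] using le_trans (by linarith) h1

theorem stmt12 (s : ℕ) (hs : 3 ≤ s) (w0 : ℝ) (hw0 : 1 < w0)
    (R : ℝ → ℝ) (hdiff : Differentiable ℝ R) (hR0 : R 0 = 1)
    (hR' : ∀ x, deriv R x
      = (1 / (1 + chebT (s-1) w0)) *
        (1 + chebT (s-1) (w0 + ((1 + chebT (s-1) w0) / deriv (chebT (s-1)) w0) * x))) :
    MonotoneOn R
      (Set.Icc (-((1 + w0) / ((1 + chebT (s-1) w0) / deriv (chebT (s-1)) w0))) 0) := by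
  set n := s - 1 with hn
  have hn1 : 1 ≤ n := by omega
  have hderiv : deriv (chebT n) w0 = chebD n w0 := (chebT_hasDerivAt n w0).deriv
  have hd : 1 ≤ chebD n w0 := chebD_pos n hn1 hw0
  have hT : 1 ≤ chebT n w0 := (chebT_ge_one n hw0.le).1
  have hc : 0 < 1 + chebT n w0 := by linarith
  set c := 1 + chebT n w0 with hcdef
  set d := deriv (chebT n) w0 with hddef
  have hdpos : 0 < d := by rw [hderiv]; linarith
  have hw1 : 0 < c / d := div_pos hc hdpos
  apply monotoneOn_of_deriv_nonneg (convex_Icc _ _) hdiff.continuous.continuousOn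
    (fun x _ => (hdiff x).differentiableWithinAt)
  intro x hx
  rw [interior_Icc] at hx
  rw [hR' x]
  apply mul_nonneg (by positivity)
  apply one_add_chebT_nonneg
  have hx1 : -((1 + w0) / (c / d)) < x := hx.1
  have h2 : -(1 + w0) ≤ (c / d) * x := by
    have h3 := mul_le_mul_of_nonneg_left hx1.le hw1.le
    have h4 : (c / d) * -((1 + w0) / (c / d)) = -(1 + w0) := by
      field_simp
    linarith
  linarith
end

section
/- For w_0 > 1 and n ≥ 2, the quantity T_n′′(w_0)(1 + T_n(w_0))/T_n′(w_0)² is strictly less than 1; equivalently, R_{n+1}′′′(0) < 1, so the error constant C_{n+1} = (1 − R_{n+1}′′′(0))/6 of the monotonic stability polynomial is strictly positive. -/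
open Real

lemma chebT_zero : chebT 0 = fun _ => (1:ℝ) := rfl

lemma chebT_one : chebT 1 = fun x => x := rfl

lemma chebT_succ_succ (n : ℕ) :
    chebT (n+2) = fun x => 2 * x * chebT (n+1) x - chebT n x := rfl

lemma chebT_succ_succ_apply (n : ℕ) (x : ℝ) :
    chebT (n+2) x = 2 * x * chebT (n+1) x - chebT n x := rfl

lemma cheb_contDiff (n : ℕ) : ContDiff ℝ ⊤ (chebT n) := by
  induction n using Nat.strong_induction_on with
  | _ n ih =>
    match n with
    | 0 => rw [chebT_zero]; exact contDiff_const
    | 1 => rw [chebT_one]; exact contDiff_id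
    | (m+2) =>
      rw [chebT_succ_succ]
      exact ((contDiff_const.mul contDiff_id).mul (ih (m+1) (by omega))).sub
        (ih m (by omega))

lemma cheb_diff (n : ℕ) : Differentiable ℝ (chebT n) :=
  (cheb_contDiff n).differentiable (by simp)

lemma cheb_deriv_diff (n : ℕ) : Differentiable ℝ (deriv (chebT n)) := by
  have h2 := (contDiff_infty_iff_deriv).1 ((cheb_contDiff n).of_le le_top)
  exact h2.2.differentiable (by norm_num)

lemma has2x (x : ℝ) : HasDerivAt (fun y : ℝ => 2 * y) 2 x := by
  simpa using (hasDerivAt_id x).const_mul 2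

lemma deriv_chebT_succ_succ (n : ℕ) (x : ℝ) :
    deriv (chebT (n+2)) x =
      2 * chebT (n+1) x + 2 * x * deriv (chebT (n+1)) x - deriv (chebT n) x := by
  have h1 : HasDerivAt (chebT (n+1)) (deriv (chebT (n+1)) x) x :=
    ((cheb_diff (n+1)) x).hasDerivAt
  have h0 : HasDerivAt (chebT n) (deriv (chebT n) x) x :=
    ((cheb_diff n) x).hasDerivAt
  have h : HasDerivAt (chebT (n+2))
      (2 * chebT (n+1) x + 2 * x * deriv (chebT (n+1)) x - deriv (chebT n) x) x := by
    rw [chebT_succ_succ]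
    exact ((has2x x).mul h1).sub h0
  exact h.deriv

lemma deriv2_chebT_succ_succ (n : ℕ) (x : ℝ) :
    deriv (deriv (chebT (n+2))) x =
      4 * deriv (chebT (n+1)) x + 2 * x * deriv (deriv (chebT (n+1))) x
        - deriv (deriv (chebT n)) x := by
  have hfun : deriv (chebT (n+2)) =
      fun y => 2 * chebT (n+1) y + 2 * y * deriv (chebT (n+1)) y - deriv (chebT n) y :=
    funext fun y => deriv_chebT_succ_succ n y
  have h1 : HasDerivAt (chebT (n+1)) (deriv (chebT (n+1)) x) x :=
    ((cheb_diff (n+1)) x).hasDerivAt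
  have h1' : HasDerivAt (deriv (chebT (n+1))) (deriv (deriv (chebT (n+1))) x) x :=
    ((cheb_deriv_diff (n+1)) x).hasDerivAt
  have h0' : HasDerivAt (deriv (chebT n)) (deriv (deriv (chebT n)) x) x :=
    ((cheb_deriv_diff n) x).hasDerivAt
  have h : HasDerivAt
      (fun y => 2 * chebT (n+1) y + 2 * y * deriv (chebT (n+1)) y - deriv (chebT n) y)
      (2 * deriv (chebT (n+1)) x +
        (2 * deriv (chebT (n+1)) x + 2 * x * deriv (deriv (chebT (n+1))) x)
        - deriv (deriv (chebT n)) x) x :=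
    ((h1.const_mul 2).add ((has2x x).mul h1')).sub h0'
  rw [hfun, h.deriv]
  ring

lemma cheb_formulas (t : ℝ) (n : ℕ) :
    chebT n (Real.cosh t) = Real.cosh (n * t) ∧
    deriv (chebT n) (Real.cosh t) * Real.sinh t = n * Real.sinh (n * t) ∧
    deriv (deriv (chebT n)) (Real.cosh t) * (Real.sinh t) ^ 3 =
      (n : ℝ) ^ 2 * Real.cosh (n * t) * Real.sinh t
        - n * Real.sinh (n * t) * Real.cosh t := by
  induction n using Nat.strong_induction_on with
  | _ n ih =>
    match n with
    | 0 => simp [chebT_zero]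
    | 1 =>
      have hid : deriv (fun x : ℝ => x) = fun _ => (1:ℝ) := by
        funext y; simp
      refine ⟨by simp [chebT_one], ?_, ?_⟩
      · rw [chebT_one, hid]; push_cast; simp
      · rw [chebT_one, hid]
        simp only [deriv_const']
        push_cast
        ring
    | (m+2) =>
      obtain ⟨hP1, hQ1, hR1⟩ := ih (m+1) (by omega)
      obtain ⟨hP0, hQ0, hR0⟩ := ih m (by omega)
      have e2 : ((m:ℝ)+2) * t = ((m:ℝ)+1) * t + t := by ring
      have e0 : (m:ℝ) * t = ((m:ℝ)+1) * t - t := by ring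
      have hC2 : Real.cosh (((m:ℝ)+2) * t)
          = Real.cosh (((m:ℝ)+1) * t) * Real.cosh t
            + Real.sinh (((m:ℝ)+1) * t) * Real.sinh t := by
        rw [e2, Real.cosh_add]
      have hS2 : Real.sinh (((m:ℝ)+2) * t)
          = Real.sinh (((m:ℝ)+1) * t) * Real.cosh t
            + Real.cosh (((m:ℝ)+1) * t) * Real.sinh t := by
        rw [e2, Real.sinh_add]
      have hC0 : Real.cosh ((m:ℝ) * t)
          = Real.cosh (((m:ℝ)+1) * t) * Real.cosh t
            - Real.sinh (((m:ℝ)+1) * t) * Real.sinh t := by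
        rw [e0, Real.cosh_sub]
      have hS0 : Real.sinh ((m:ℝ) * t)
          = Real.sinh (((m:ℝ)+1) * t) * Real.cosh t
            - Real.cosh (((m:ℝ)+1) * t) * Real.sinh t := by
        rw [e0, Real.sinh_sub]
      push_cast at hP1 hQ1 hR1 hP0 hQ0 hR0 ⊢
      refine ⟨?_, ?_, ?_⟩
      · rw [chebT_succ_succ_apply]
        linear_combination (2 * Real.cosh t) * hP1 - hP0 - hC2 - hC0
      · rw [deriv_chebT_succ_succ]
        linear_combination (2 * Real.sinh t) * hP1 + (2 * Real.cosh t) * hQ1 - hQ0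
          - ((m:ℝ)+2) * hS2 - (m:ℝ) * hS0
      · rw [deriv2_chebT_succ_succ]
        linear_combination (4 * Real.sinh t ^ 2) * hQ1 + (2 * Real.cosh t) * hR1 - hR0
          - (((m:ℝ)+2)^2 * Real.sinh t) * hC2 + (((m:ℝ)+2) * Real.cosh t) * hS2
          - ((m:ℝ)^2 * Real.sinh t) * hC0 + ((m:ℝ) * Real.cosh t) * hS0

lemma sinh_mul_le (t : ℝ) (ht : 0 ≤ t) (n : ℕ) :
    (n:ℝ) * Real.sinh t ≤ Real.sinh (n * t) := by
  induction n with
  | zero => simp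
  | succ m ih =>
    have e : ((m:ℝ)+1) * t = (m:ℝ) * t + t := by ring
    push_cast
    rw [e, Real.sinh_add]
    have h1 : 1 ≤ Real.cosh t := Real.one_le_cosh t
    have h2 : 1 ≤ Real.cosh ((m:ℝ) * t) := Real.one_le_cosh _
    have h3 : 0 ≤ Real.sinh ((m:ℝ) * t) := by
      rw [← Real.sinh_zero]
      exact Real.sinh_le_sinh.2 (by positivity)
    have h4 : 0 ≤ Real.sinh t := by
      rw [← Real.sinh_zero]
      exact Real.sinh_le_sinh.2 ht
    nlinarith

theorem stmt16 (n : ℕ) (hn : 2 ≤ n) (w0 : ℝ) (hw0 : 1 < w0) :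
    deriv (deriv (chebT n)) w0 * (1 + chebT n w0) / (deriv (chebT n) w0) ^ 2 < 1 := by
  -- set t = arcosh w0
  set t : ℝ := Real.log (w0 + Real.sqrt (w0 ^ 2 - 1)) with ht_def
  have hsq : Real.sqrt (w0 ^ 2 - 1) ^ 2 = w0 ^ 2 - 1 :=
    Real.sq_sqrt (by nlinarith)
  have hsqnn : 0 ≤ Real.sqrt (w0 ^ 2 - 1) := Real.sqrt_nonneg _
  have hsqpos : 0 < Real.sqrt (w0 ^ 2 - 1) := by
    rcases hsqnn.lt_or_eq with h | h
    · exact h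
    · exfalso; nlinarith [hsq, h.symm]
  have hargs : 1 < w0 + Real.sqrt (w0 ^ 2 - 1) := by linarith
  have hargpos : 0 < w0 + Real.sqrt (w0 ^ 2 - 1) := by linarith
  have htpos : 0 < t := Real.log_pos hargs
  have hexp : Real.exp t = w0 + Real.sqrt (w0 ^ 2 - 1) := Real.exp_log hargpos
  have hexpneg : Real.exp (-t) = w0 - Real.sqrt (w0 ^ 2 - 1) := by
    rw [Real.exp_neg, hexp]
    field_simp
    nlinarith [hsq]
  have hcosh : Real.cosh t = w0 := by
    rw [Real.cosh_eq, hexp, hexpneg]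
    ring
  obtain ⟨hP, hQ, hR⟩ := cheb_formulas t n
  rw [hcosh] at hP hQ hR
  set S := Real.sinh t with hS_def
  set C := Real.cosh (n * t) with hC_def
  set s := Real.sinh (n * t) with hs_def
  have hSpos : 0 < S := Real.sinh_pos_iff.2 htpos
  have hnpos : (0:ℝ) < n := by positivity
  have hspos : 0 < s := Real.sinh_pos_iff.2 (by positivity)
  have hCpos : (1:ℝ) ≤ C := Real.one_le_cosh _
  have hs2 : s ^ 2 = C ^ 2 - 1 := by
    have := Real.cosh_sq (n * t)
    rw [← hC_def, ← hs_def] at this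
    linarith
  -- key inequality n*S < s*c
  have hkey : (n:ℝ) * S < s * w0 := by
    have h1 : (n:ℝ) * S ≤ s := sinh_mul_le t htpos.le n
    nlinarith [mul_pos hspos (show (0:ℝ) < w0 - 1 by linarith)]
  have hdval : deriv (chebT n) w0 = (n:ℝ) * s / S := by
    rw [eq_div_iff hSpos.ne']
    exact hQ
  have hdpos : 0 < deriv (chebT n) w0 := by
    rw [hdval]; positivity
  rw [div_lt_one (by positivity), hP]
  rw [← mul_lt_mul_iff_left₀ (show (0:ℝ) < S ^ 3 by positivity)]
  have h2 : (deriv (chebT n) w0) ^ 2 * S ^ 3 = (n:ℝ) ^ 2 * s ^ 2 * S := by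
    have hq2 : (deriv (chebT n) w0 * S) ^ 2 * S = ((n:ℝ) * s) ^ 2 * S := by rw [hQ]
    linear_combination hq2
  have h3 : deriv (deriv (chebT n)) w0 * (1 + C) * S ^ 3
      = ((n:ℝ) ^ 2 * C * S - n * s * w0) * (1 + C) := by
    linear_combination (1 + C) * hR
  rw [h3, h2, hs2]
  have hfinal : (0:ℝ) < (n:ℝ) * ((1 + C) * (s * w0 - n * S)) := by
    have h1C : (0:ℝ) < 1 + C := by linarith
    have hgap : (0:ℝ) < s * w0 - n * S := by linarith
    positivity
  nlinarith [hfinal]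
end
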